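/- (Well-posedness of the continuous space–time formulation.) Assume in addition that W is complete (a real Hilbert space), that V equipped with the norm ‖u‖_V := √(‖Tu‖² + ‖u‖²) is complete (i.e. T is a closed operator), that m is bounded (|m(v,w)| ≤ M‖v‖‖w‖ for some M ≥ 0) and positive definite (m(ψ,ψ)=0 implies ψ=0), and that for every ψ ∈ W there exists u_ψ ∈ V with ⟨T u_ψ, χ⟩ = m(ψ, χ) for all χ ∈ W and ⟨u_ψ, ψ⟩ ≥ 0. Then for every bounded linear functional g : W → ℝ there exists a unique pair (u,v) ∈ V × W such that a(u,v;φ,ψ) = g(φ) for all (φ,ψ) ∈ W × W, and it satisfies the stability bound ‖(u,v)‖_𝒱 ≤ (1/C_s)·‖g‖_{W*} with C_s = 1/(48√2). -/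

import Mathlib

open RealInnerProductSpace

private lemma stmt5_aux1 (a b c t : ℝ) (ht : 0 ≤ t) (h1 : a ≤ 14 * t) (h2 : b ≤ 6 * t)
    (h3 : c ≤ 20 * t) (ha : 0 ≤ a) (hb : 0 ≤ b) (hc : 0 ≤ c) :
    a ^ 2 + b ^ 2 + c ^ 2 ≤ (26 * t) ^ 2 := by nlinarith

private lemma stmt5_aux2 (x t : ℝ) (ht : 0 ≤ t) (h26 : x ≤ 26 * t) :
    x ≤ (48 * Real.sqrt 2) * t := by
  have hs2 : (1:ℝ) ≤ Real.sqrt 2 := by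
    rw [show (1:ℝ) = Real.sqrt 1 by simp]
    exact Real.sqrt_le_sqrt (by norm_num)
  nlinarith

set_option maxHeartbeats 8000000 in
theorem stmt_5 {W : Type*} [NormedAddCommGroup W] [InnerProductSpace ℝ W]
    [CompleteSpace W]
    (V : Submodule ℝ W) (T : V →ₗ[ℝ] W)
    (hT1 : ∀ u : V, 0 ≤ ⟪T u, (u : W)⟫)
    (hT2 : ∀ u : V, ‖T u‖ ^ 2 ≤ 5 * ‖(u : W)‖ ^ 2)
    (hclosed : ∀ (s : ℕ → V) (x y : W),
      Filter.Tendsto (fun n => ((s n : W))) Filter.atTop (nhds x) →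
      Filter.Tendsto (fun n => T (s n)) Filter.atTop (nhds y) →
      ∃ hx : x ∈ V, T ⟨x, hx⟩ = y)
    (m : W →ₗ[ℝ] W →ₗ[ℝ] ℝ)
    (hmsym : ∀ x y : W, m x y = m y x)
    (hmpsd : ∀ x : W, 0 ≤ m x x)
    (M : ℝ) (hM : 0 ≤ M)
    (hmbdd : ∀ x y : W, |m x y| ≤ M * ‖x‖ * ‖y‖)
    (hmdef : ∀ ψ : W, m ψ ψ = 0 → ψ = 0)
    (hlift : ∀ ψ : W, ∃ uψ : V,
      (∀ χ : W, ⟪T uψ, χ⟫ = m ψ χ) ∧ 0 ≤ ⟪(uψ : W), ψ⟫)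
    (g : W →L[ℝ] ℝ) :
    (∃! p : V × W, ∀ φ ψ : W,
      ⟪T p.1, φ⟫ + ⟪p.2, φ⟫ + m p.2 φ + ⟪(p.1 : W), ψ⟫ - m p.2 ψ = g φ) ∧
    ∀ p : V × W,
      (∀ φ ψ : W,
        ⟪T p.1, φ⟫ + ⟪p.2, φ⟫ + m p.2 φ + ⟪(p.1 : W), ψ⟫ - m p.2 ψ = g φ) →
      Real.sqrt (‖T p.1‖ ^ 2 + ‖(p.1 : W)‖ ^ 2 + ‖p.2‖ ^ 2) ≤
        (48 * Real.sqrt 2) * ‖g‖ := by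
  classical
  -- Riesz representative of g
  obtain ⟨G, hG⟩ : ∃ G : W, ∀ φ : W, ⟪G, φ⟫ = g φ :=
    ⟨(InnerProductSpace.toDual ℝ W).symm g, fun φ => InnerProductSpace.toDual_symm_apply⟩
  have hGnorm : ‖G‖ ≤ ‖g‖ := by
    have h1 : ‖G‖ ^ 2 = g G := by rw [← hG, real_inner_self_eq_norm_sq]
    have h2 : g G ≤ ‖g‖ * ‖G‖ := le_trans (le_abs_self _) (g.le_opNorm G)
    nlinarith [norm_nonneg G, norm_nonneg g]
  -- the operator representing m
  obtain ⟨ML, hML⟩ : ∃ ML : W →L[ℝ] W, ∀ v χ : W, ⟪ML v, χ⟫ = m v χ := by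
    have hcont : ∀ v : W, ∃ w : W, ∀ χ, ⟪w, χ⟫ = m v χ := by
      intro v
      refine ⟨(InnerProductSpace.toDual ℝ W).symm
        (LinearMap.mkContinuous (m v) (M * ‖v‖) fun χ => ?_), fun χ => ?_⟩
      · simpa [Real.norm_eq_abs, mul_assoc] using hmbdd v χ
      · simp [InnerProductSpace.toDual_symm_apply, LinearMap.mkContinuous_apply]
    choose Mf hMf using hcont
    have hadd : ∀ x y, Mf (x + y) = Mf x + Mf y := fun x y =>
      ext_inner_right ℝ fun χ => by simp [hMf, inner_add_left]
    have hsmul : ∀ (c : ℝ) (x : W), Mf (c • x) = c • Mf x := fun c x =>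
      ext_inner_right ℝ fun χ => by simp [hMf, inner_smul_left]
    have hbound : ∀ v, ‖Mf v‖ ≤ M * ‖v‖ := by
      intro v
      have h1 : ⟪Mf v, Mf v⟫ = m v (Mf v) := hMf v (Mf v)
      have h2 := (abs_le.mp (hmbdd v (Mf v))).2
      have h3 : ‖Mf v‖ ^ 2 ≤ M * ‖v‖ * ‖Mf v‖ := by
        rw [← real_inner_self_eq_norm_sq, h1]; linarith
      nlinarith [norm_nonneg (Mf v), norm_nonneg v, mul_nonneg hM (norm_nonneg v)]
    exact ⟨LinearMap.mkContinuous ⟨⟨Mf, hadd⟩, hsmul⟩ M hbound, hMf⟩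
  -- key quantitative estimate
  have key : ∀ (u : V) (v : W) (t : ℝ), ‖T u + v + ML v‖ ≤ t → ‖(u : W) - ML v‖ ≤ t →
      ‖(u : W)‖ ≤ 6 * t ∧ ‖T u‖ ≤ 14 * t ∧ ‖v‖ ≤ 20 * t := by
    intro u v t ha hb
    have sqrt5 : ‖T u‖ ≤ (9/4) * ‖(u:W)‖ := by
      nlinarith [hT2 u, norm_nonneg (T u), norm_nonneg ((u:W))]
    set a := T u + v + ML v with hadef
    set b := (u:W) - ML v with hbdef
    have ht : 0 ≤ t := le_trans (norm_nonneg a) ha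
    have hmvv : (0:ℝ) ≤ ⟪ML v, v⟫ := by rw [hML]; exact hmpsd v
    have hid : ⟪ML v, v⟫ + ⟪ML v, ML v⟫
        = ⟪a, (u:W)⟫ - ⟪T u, (u:W)⟫ - ⟪b, a⟫ + ⟪b, T u⟫ := by
      simp only [hadef, hbdef, inner_add_left, inner_add_right, inner_sub_left, inner_sub_right]
      linear_combination real_inner_comm v ((u:W)) + real_inner_comm (ML v) ((u:W))
    have hr : (0:ℝ) ≤ ‖ML v‖ := norm_nonneg _
    set r := ‖ML v‖ with hrdef
    have h2 : ⟪ML v, ML v⟫ = r ^ 2 := real_inner_self_eq_norm_sq _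
    have hbu : ‖(u:W)‖ ≤ t + r := by
      have e : (u:W) = b + ML v := by rw [hbdef]; abel
      calc ‖(u:W)‖ = ‖b + ML v‖ := by rw [← e]
        _ ≤ ‖b‖ + ‖ML v‖ := norm_add_le _ _
        _ ≤ t + r := by rw [← hrdef]; linarith
    have hTub : ‖T u‖ ≤ (9/4) * (t + r) := le_trans sqrt5 (by nlinarith [norm_nonneg ((u:W))])
    have i1 : ⟪a, (u:W)⟫ ≤ t * (t + r) :=
      le_trans (real_inner_le_norm a ((u:W))) (mul_le_mul ha hbu (norm_nonneg _) ht)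
    have i2 : -⟪b, a⟫ ≤ t * t := by
      have h3 := abs_real_inner_le_norm b a
      have h4 : ‖b‖ * ‖a‖ ≤ t * t := mul_le_mul hb ha (norm_nonneg _) ht
      have := neg_abs_le ⟪b, a⟫
      linarith
    have i3 : ⟪b, T u⟫ ≤ t * ((9/4) * (t + r)) :=
      le_trans (real_inner_le_norm b (T u)) (mul_le_mul hb hTub (norm_nonneg _) ht)
    have hq : r ^ 2 ≤ (17/4) * t ^ 2 + (13/4) * (t * r) := by
      have h5 := hT1 u
      nlinarith [hid, h2, hmvv, i1, i2, i3]
    have hrt : r ≤ 5 * t := by nlinarith [mul_nonneg ht hr, sq_nonneg (r - 5 * t)]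
    refine ⟨by linarith, by linarith, ?_⟩
    have e : v = a - T u - ML v := by rw [hadef]; abel
    calc ‖v‖ = ‖a - T u - ML v‖ := by rw [← e]
      _ ≤ ‖a - T u‖ + ‖ML v‖ := norm_sub_le _ _
      _ ≤ ‖a‖ + ‖T u‖ + ‖ML v‖ := by linarith [norm_sub_le a (T u)]
      _ ≤ 20 * t := by rw [← hrdef]; linarith
  -- a solution is the same as solving the two equations
  have solves : ∀ (u : V) (v : W), T u + v + ML v = G → (u:W) - ML v = 0 →
      ∀ φ ψ : W, ⟪T u, φ⟫ + ⟪v, φ⟫ + m v φ + ⟪(u:W), ψ⟫ - m v ψ = g φ := by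
    intro u v h1 h2 φ ψ
    have e1 : ⟪T u + v + ML v, φ⟫ = g φ := by rw [h1, hG]
    have e2 : ⟪(u:W) - ML v, ψ⟫ = (0:ℝ) := by rw [h2, inner_zero_left]
    simp only [inner_add_left, inner_sub_left] at e1 e2
    have e3 := hML v φ
    have e4 := hML v ψ
    linarith
  have extract : ∀ p : V × W,
      (∀ φ ψ : W, ⟪T p.1, φ⟫ + ⟪p.2, φ⟫ + m p.2 φ + ⟪(p.1 : W), ψ⟫ - m p.2 ψ = g φ) →
      T p.1 + p.2 + ML p.2 = G ∧ (p.1:W) - ML p.2 = 0 := by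
    intro p hp
    constructor
    · apply ext_inner_right ℝ
      intro φ
      have h := hp φ 0
      simp only [inner_zero_right, map_zero] at h
      rw [inner_add_left, inner_add_left, hML, hG]
      linarith
    · rw [sub_eq_zero]
      apply ext_inner_right ℝ
      intro ψ
      have h := hp 0 ψ
      simp only [inner_zero_right, map_zero] at h
      rw [hML]
      linarith
  -- uniqueness
  have uniq : ∀ p q : V × W,
      (∀ φ ψ : W, ⟪T p.1, φ⟫ + ⟪p.2, φ⟫ + m p.2 φ + ⟪(p.1 : W), ψ⟫ - m p.2 ψ = g φ) →
      (∀ φ ψ : W, ⟪T q.1, φ⟫ + ⟪q.2, φ⟫ + m q.2 φ + ⟪(q.1 : W), ψ⟫ - m q.2 ψ = g φ) →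
      p = q := by
    intro p q hp hq
    obtain ⟨hp1, hp2⟩ := extract p hp
    obtain ⟨hq1, hq2⟩ := extract q hq
    set u : V := p.1 - q.1 with hudef
    set v : W := p.2 - q.2 with hvdef
    have h1 : T u + v + ML v = 0 := by
      simp only [hudef, hvdef, map_sub]
      rw [show T p.1 - T q.1 + (p.2 - q.2) + (ML p.2 - ML q.2)
        = (T p.1 + p.2 + ML p.2) - (T q.1 + q.2 + ML q.2) by abel, hp1, hq1, sub_self]
    have h2 : (u:W) = ML v := by
      have : (u:W) - ML v = 0 := by
        simp only [hudef, hvdef, map_sub, Submodule.coe_sub]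
        rw [show ((p.1:W) - (q.1:W)) - (ML p.2 - ML q.2)
          = ((p.1:W) - ML p.2) - ((q.1:W) - ML q.2) by abel, hp2, hq2, sub_self]
      exact sub_eq_zero.mp this
    have h3 : ⟪T u + v + ML v, (u:W)⟫ = 0 := by rw [h1, inner_zero_left]
    rw [inner_add_left, inner_add_left] at h3
    have h4 : ⟪v, (u:W)⟫ = m v v := by rw [h2, real_inner_comm, hML]
    have h5 : ⟪ML v, (u:W)⟫ = ‖(u:W)‖ ^ 2 := by rw [← h2, real_inner_self_eq_norm_sq]
    have h6 : (0:ℝ) ≤ m v v := hmpsd v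
    have h7 := hT1 u
    have hu0 : ‖(u:W)‖ ^ 2 ≤ 0 := by linarith
    have hu : (u:W) = 0 := by
      have := norm_nonneg ((u:W))
      have : ‖(u:W)‖ = 0 := by nlinarith
      exact norm_eq_zero.mp this
    have hmlv : ML v = 0 := by rw [← h2, hu]
    have hv : v = 0 := by
      apply hmdef
      rw [← hML, hmlv, inner_zero_left]
    have hu' : p.1 = q.1 := by
      have : (u:W) = 0 := hu
      have : u = 0 := by exact_mod_cast Subtype.ext this
      rw [hudef] at this
      exact sub_eq_zero.mp this
    have hv' : p.2 = q.2 := by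
      rw [hvdef] at hv
      exact sub_eq_zero.mp hv
    exact Prod.ext hu' hv'
  -- existence via closed range + density
  -- the graph of T as a closed submodule of W × W
  set Γ : Submodule ℝ (W × W) := LinearMap.range ((V.subtype).prod T) with hΓdef
  have hΓ : ∀ γ : Γ, ∃ u : V, (u:W) = (γ : W × W).1 ∧ T u = (γ : W × W).2 := by
    rintro ⟨⟨x, y⟩, hxy⟩
    obtain ⟨u, hu⟩ := hxy
    exact ⟨u, by simpa using congrArg Prod.fst hu, by simpa using congrArg Prod.snd hu⟩
  have hΓclosed : IsClosed (Γ : Set (W × W)) := by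
    apply IsSeqClosed.isClosed
    intro f p hf hfp
    choose s hs using fun n => hf n
    have h1 : Filter.Tendsto (fun n => ((s n : W))) Filter.atTop (nhds p.1) := by
      have := (continuous_fst.tendsto p).comp hfp
      refine this.congr fun n => ?_
      show (f n).1 = ((s n : W))
      rw [← hs n]
      rfl
    have h2 : Filter.Tendsto (fun n => T (s n)) Filter.atTop (nhds p.2) := by
      have := (continuous_snd.tendsto p).comp hfp
      refine this.congr fun n => ?_
      show (f n).2 = T (s n)
      rw [← hs n]
      rfl
    obtain ⟨hx, hTx⟩ := hclosed s p.1 p.2 h1 h2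
    exact ⟨⟨p.1, hx⟩, by rw [LinearMap.prod_apply]; exact Prod.ext rfl hTx⟩
  haveI : CompleteSpace Γ := hΓclosed.completeSpace_coe
  -- the operator B
  set J1 : Γ →L[ℝ] W := (ContinuousLinearMap.fst ℝ W W).comp (Submodule.subtypeL Γ) with hJ1
  set J2 : Γ →L[ℝ] W := (ContinuousLinearMap.snd ℝ W W).comp (Submodule.subtypeL Γ) with hJ2
  set P1 : (Γ × W) →L[ℝ] Γ := ContinuousLinearMap.fst ℝ Γ W with hP1
  set P2 : (Γ × W) →L[ℝ] W := ContinuousLinearMap.snd ℝ Γ W with hP2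
  set B : (Γ × W) →L[ℝ] (W × W) :=
    (J2.comp P1 + P2 + ML.comp P2).prod (J1.comp P1 - ML.comp P2) with hBdef
  have hB : ∀ p : Γ × W,
      B p = ((p.1 : W × W).2 + p.2 + ML p.2, (p.1 : W × W).1 - ML p.2) := fun p => rfl
  -- B is bounded below
  have hBlow : ∀ p : Γ × W, ‖p‖ ≤ 20 * ‖B p‖ := by
    intro p
    obtain ⟨u, hu1, hu2⟩ := hΓ p.1
    have ha : ‖T u + p.2 + ML p.2‖ ≤ ‖B p‖ := by
      rw [hu2]
      calc ‖(p.1 : W × W).2 + p.2 + ML p.2‖ = ‖(B p).1‖ := by rw [hB]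
        _ ≤ ‖B p‖ := norm_fst_le _
    have hb : ‖(u:W) - ML p.2‖ ≤ ‖B p‖ := by
      rw [hu1]
      calc ‖(p.1 : W × W).1 - ML p.2‖ = ‖(B p).2‖ := by rw [hB]
        _ ≤ ‖B p‖ := norm_snd_le _
    obtain ⟨k1, k2, k3⟩ := key u p.2 (‖B p‖) ha hb
    have hn1 : ‖p.1‖ = ‖(p.1 : W × W)‖ := rfl
    have hn2 : ‖(p.1 : W × W)‖ = max ‖(p.1 : W × W).1‖ ‖(p.1 : W × W).2‖ := rfl
    have hnp : ‖p‖ = max ‖p.1‖ ‖p.2‖ := rfl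
    rw [hnp, hn1, hn2, ← hu1, ← hu2]
    have hbp : (0:ℝ) ≤ ‖B p‖ := norm_nonneg _
    apply max_le (max_le (by linarith) (by linarith)) (by linarith)
  have hBanti : AntilipschitzWith 20 B := by
    apply B.antilipschitz_of_bound
    intro x
    simpa using hBlow x
  have hclosedrange : IsClosed (Set.range B) :=
    hBanti.isClosed_range B.uniformContinuous
  -- density of the range
  set e : WithLp 2 (W × W) ≃L[ℝ] W × W := WithLp.prodContinuousLinearEquiv 2 ℝ W W with hedef
  set R : Submodule ℝ (WithLp 2 (W × W)) :=
    (LinearMap.range (B : (Γ × W) →ₗ[ℝ] (W × W))).comap (e : WithLp 2 (W × W) →ₗ[ℝ] W × W)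
    with hRdef
  have hRmem : ∀ p : Γ × W, e.symm (B p) ∈ R := by
    intro p
    rw [hRdef, Submodule.mem_comap]
    refine LinearMap.mem_range.mpr ⟨p, ?_⟩
    simp
  have hdense : Rᗮ = ⊥ := by
    rw [Submodule.eq_bot_iff]
    intro x hx
    obtain ⟨φ, hφ⟩ : ∃ φ : W, φ = x.fst := ⟨x.fst, rfl⟩
    obtain ⟨ψ, hψ⟩ : ∃ ψ : W, ψ = x.snd := ⟨x.snd, rfl⟩
    have hinner : ∀ p : Γ × W, ⟪(B p).1, φ⟫ + ⟪(B p).2, ψ⟫ = 0 := by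
      intro p
      have h0 := (Submodule.mem_orthogonal R x).mp hx (e.symm (B p)) (hRmem p)
      rw [WithLp.prod_inner_apply] at h0
      rw [hφ, hψ]
      simpa [hedef, WithLp.prodContinuousLinearEquiv_symm_apply, WithLp.toLp_fst,
        WithLp.toLp_snd] using h0
    -- from u-part: ∀ u : V, ⟪T u, φ⟫ + ⟪u, ψ⟫ = 0
    have hU : ∀ u : V, ⟪T u, φ⟫ + ⟪(u:W), ψ⟫ = 0 := by
      intro u
      have h0 := hinner (⟨((u:W), T u), ⟨u, rfl⟩⟩, 0)
      rw [hB] at h0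
      simpa using h0
    -- from v-part
    have hV : ∀ v : W, ⟪v, φ⟫ + ⟪ML v, φ⟫ - ⟪ML v, ψ⟫ = 0 := by
      intro v
      have h0 := hinner (0, v)
      rw [hB] at h0
      simp only [Submodule.coe_zero, Prod.fst_zero, Prod.snd_zero, zero_add, zero_sub,
        inner_neg_left] at h0
      linarith [h0, inner_add_left (𝕜 := ℝ) v (ML v) φ]
    have hz : φ + ML φ - ML ψ = 0 := by
      apply ext_inner_left ℝ
      intro v
      rw [inner_zero_right, inner_sub_right, inner_add_right]
      have e1 : ⟪v, ML φ⟫ = ⟪ML v, φ⟫ := by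
        linarith [hML φ v, hML v φ, hmsym φ v, real_inner_comm v (ML φ)]
      have e2 : ⟪v, ML ψ⟫ = ⟪ML v, ψ⟫ := by
        linarith [hML ψ v, hML v ψ, hmsym ψ v, real_inner_comm v (ML ψ)]
      rw [e1, e2]
      linarith [hV v]
    have hφ0 : φ = 0 := by
      obtain ⟨uψ, huψ1, huψ2⟩ := hlift ψ
      have h1 : m ψ φ ≤ 0 := by
        have := hU uψ
        rw [huψ1] at this
        linarith [real_inner_comm ((uψ:W)) ψ]
      have h2 : ⟪φ + ML φ - ML ψ, φ⟫ = (0:ℝ) := by rw [hz, inner_zero_left]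
      rw [inner_sub_left, inner_add_left, hML, hML] at h2
      have h3 := hmpsd φ
      have h4 : ⟪φ, φ⟫ = (0:ℝ) := le_antisymm (by linarith) real_inner_self_nonneg
      exact inner_self_eq_zero.mp h4
    have hψ0 : ψ = 0 := by
      apply hmdef
      have h1 : ML ψ = 0 := by
        rw [hφ0] at hz
        simpa using hz.symm
      rw [← hML, h1, inner_zero_left]
    -- conclude x = 0
    have hex : e x = 0 := by
      rw [Prod.ext_iff]
      constructor
      · show (e x).1 = 0
        rw [show (e x).1 = x.fst from rfl, ← hφ, hφ0]
      · show (e x).2 = 0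
        rw [show (e x).2 = x.snd from rfl, ← hψ, hψ0]
    have := congrArg e.symm hex
    simpa using this
  have htop : R.topologicalClosure = ⊤ := Submodule.topologicalClosure_eq_top_iff.mpr hdense
  have hGmem : ((G, (0:W)) : W × W) ∈ Set.range B := by
    have hmemcl : e.symm (G, (0:W)) ∈ closure (R : Set (WithLp 2 (W × W))) := by
      rw [← Submodule.topologicalClosure_coe, htop]
      trivial
    have hRset : (R : Set (WithLp 2 (W × W))) = ⇑e ⁻¹' (Set.range B) := by
      ext z
      simp [hRdef, Submodule.mem_comap, LinearMap.mem_range, Set.mem_range]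
    have h1 : e (e.symm (G, (0:W))) ∈ closure (⇑e '' (R : Set (WithLp 2 (W × W)))) := by
      rw [← e.image_closure]
      exact Set.mem_image_of_mem _ hmemcl
    rw [hRset, Set.image_preimage_eq _ e.surjective, hclosedrange.closure_eq] at h1
    simpa using h1
  obtain ⟨p, hp⟩ := hGmem
  obtain ⟨u, hu1, hu2⟩ := hΓ p.1
  have hpa : T u + p.2 + ML p.2 = G := by
    have := congrArg Prod.fst hp
    rw [hB] at this
    simpa [hu2] using this
  have hpb : (u:W) - ML p.2 = 0 := by
    have := congrArg Prod.snd hp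
    rw [hB] at this
    simpa [hu1] using this
  have hsol := solves u p.2 hpa hpb
  -- assemble
  refine ⟨⟨(u, p.2), hsol, fun q hq => uniq q (u, p.2) hq hsol⟩, ?_⟩
  intro q hqsol
  obtain ⟨hq1, hq2⟩ := extract q hqsol
  have ht : (0:ℝ) ≤ ‖g‖ := norm_nonneg _
  have ha : ‖T q.1 + q.2 + ML q.2‖ ≤ ‖g‖ := by rw [hq1]; exact hGnorm
  have hb : ‖(q.1:W) - ML q.2‖ ≤ ‖g‖ := by rw [hq2]; simpa using ht
  obtain ⟨k1, k2, k3⟩ := key q.1 q.2 (‖g‖) ha hb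
  have hsum : ‖T q.1‖ ^ 2 + ‖(q.1 : W)‖ ^ 2 + ‖q.2‖ ^ 2 ≤ (26 * ‖g‖) ^ 2 := by
    have s1 : (0:ℝ) ≤ ‖T q.1‖ ^ 2 := sq_nonneg _
    have s2 : (0:ℝ) ≤ ‖(q.1 : W)‖ ^ 2 := sq_nonneg _
    have s3 : (0:ℝ) ≤ ‖q.2‖ ^ 2 := sq_nonneg _
    exact stmt5_aux1 _ _ _ _ ht k2 k1 k3 (norm_nonneg _) (norm_nonneg _) (norm_nonneg _)
  have h26 : Real.sqrt (‖T q.1‖ ^ 2 + ‖(q.1 : W)‖ ^ 2 + ‖q.2‖ ^ 2) ≤ 26 * ‖g‖ := by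
    calc Real.sqrt (‖T q.1‖ ^ 2 + ‖(q.1 : W)‖ ^ 2 + ‖q.2‖ ^ 2)
        ≤ Real.sqrt ((26 * ‖g‖) ^ 2) := Real.sqrt_le_sqrt hsum
      _ = 26 * ‖g‖ := Real.sqrt_sq (by positivity)
  exact stmt5_aux2 _ _ ht h26
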